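/- On the polynomial algebra ℂ[x_1,x_2,x_3,x_4], define linear operators φ_1 = ∂/∂x_1, φ_2 = ∂/∂x_2, φ_3 = (multiplication by x_3), φ_4 = (multiplication by x_4), and φ̃¹ = (multiplication by x_1), φ̃² = (multiplication by x_2), φ̃³ = −∂/∂x_3, φ̃⁴ = −∂/∂x_4. Set E^i_j = φ̃^i ∘ φ_j and ⟨E⟩ = Σ_{c=1}^4 E^c_c. Then for all i,j ∈ {1,…,4}, Σ_{k=1}^4 E^i_k ∘ E^k_j = E^i_j ∘ (⟨E⟩ + 3·id) as linear operators on ℂ[x_1,x_2,x_3,x_4]; that is, the bosonic oscillator realization of u(2,2) satisfies the quadratic characteristic identity E(E − (⟨E⟩ + 3)) = 0 characteristic of massless representations. -/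

import Mathlib

open scoped BigOperators

/-- The bosonic oscillator operators `φ = (∂/∂x₁, ∂/∂x₂, x₃·, x₄·)` on
`ℂ[x₁,x₂,x₃,x₄]`. -/
noncomputable def bosPhi : Fin 4 → Module.End ℂ (MvPolynomial (Fin 4) ℂ) :=
  ![(MvPolynomial.pderiv 0).toLinearMap, (MvPolynomial.pderiv 1).toLinearMap,
    LinearMap.mulLeft ℂ (MvPolynomial.X 2), LinearMap.mulLeft ℂ (MvPolynomial.X 3)]

/-- The bosonic oscillator operators `φ̃ = (x₁·, x₂·, −∂/∂x₃, −∂/∂x₄)` on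
`ℂ[x₁,x₂,x₃,x₄]`. -/
noncomputable def bosPhiT : Fin 4 → Module.End ℂ (MvPolynomial (Fin 4) ℂ) :=
  ![LinearMap.mulLeft ℂ (MvPolynomial.X 0), LinearMap.mulLeft ℂ (MvPolynomial.X 1),
    -(MvPolynomial.pderiv 2).toLinearMap, -(MvPolynomial.pderiv 3).toLinearMap]

/-- The bosonic oscillator realization `E^i_j = φ̃^i ∘ φ_j` of `u(2,2)`. -/
noncomputable def bosE (i j : Fin 4) : Module.End ℂ (MvPolynomial (Fin 4) ℂ) :=
  bosPhiT i * bosPhi j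

/-- The linear Casimir `⟨E⟩ = Σ_c E^c_c`. -/
noncomputable def bosTrE : Module.End ℂ (MvPolynomial (Fin 4) ℂ) :=
  ∑ c : Fin 4, bosE c c

open MvPolynomial in
lemma bos_commDM (i j : Fin 4) :
    ((pderiv i).toLinearMap : Module.End ℂ (MvPolynomial (Fin 4) ℂ)) *
        LinearMap.mulLeft ℂ (X j) =
      LinearMap.mulLeft ℂ (X j) * (pderiv i).toLinearMap +
        (if i = j then 1 else 0) := by
  ext p
  by_cases h : i = j <;>
    simp [Module.End.mul_apply, LinearMap.mulLeft_apply, pderiv_mul, pderiv_X,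
      Pi.single_apply, mul_comm, h, eq_comm, add_comm]

open MvPolynomial in
lemma bos_commDD (i j : Fin 4) :
    ((pderiv i).toLinearMap : Module.End ℂ (MvPolynomial (Fin 4) ℂ)) *
        (pderiv j).toLinearMap =
      (pderiv j).toLinearMap * (pderiv i).toLinearMap := by
  apply LinearMap.ext; intro p
  show pderiv i (pderiv j p) = pderiv j (pderiv i p)
  induction p using MvPolynomial.induction_on with
  | C a => simp [pderiv_C]
  | add p q hp hq => simp [hp, hq]
  | mul_X p n hp =>
    simp only [pderiv_mul, hp, pderiv_X, Pi.single_apply]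
    split_ifs <;> simp_all [Pi.single_apply] <;> ring

open MvPolynomial in
lemma bos_commMM (i j : Fin 4) :
    (LinearMap.mulLeft ℂ (X i) : Module.End ℂ (MvPolynomial (Fin 4) ℂ)) *
        LinearMap.mulLeft ℂ (X j) =
      LinearMap.mulLeft ℂ (X j) * LinearMap.mulLeft ℂ (X i) := by
  ext p
  simp [Module.End.mul_apply, mul_comm, mul_left_comm, mul_assoc]

lemma bos_commDM_eq (i : Fin 4) :
    ((MvPolynomial.pderiv i).toLinearMap : Module.End ℂ (MvPolynomial (Fin 4) ℂ)) *
        LinearMap.mulLeft ℂ (MvPolynomial.X i) =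
      LinearMap.mulLeft ℂ (MvPolynomial.X i) * (MvPolynomial.pderiv i).toLinearMap + 1 := by
  have h := bos_commDM i i; rwa [if_pos rfl] at h

lemma bos_commDM_ne (i j : Fin 4) (hij : i ≠ j) :
    ((MvPolynomial.pderiv i).toLinearMap : Module.End ℂ (MvPolynomial (Fin 4) ℂ)) *
        LinearMap.mulLeft ℂ (MvPolynomial.X j) =
      LinearMap.mulLeft ℂ (MvPolynomial.X j) * (MvPolynomial.pderiv i).toLinearMap := by
  have h := bos_commDM i j; rwa [if_neg hij, add_zero] at h

lemma bos_neg_comm (f g : Module.End ℂ (MvPolynomial (Fin 4) ℂ)) (h : f * g = g * f) :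
    f * -g = -g * f := by
  apply LinearMap.ext; intro p
  have hp := DFunLike.congr_fun h p
  simp only [Module.End.mul_apply] at hp
  simp only [Module.End.mul_apply, LinearMap.neg_apply, map_neg, hp]

lemma bos_neg_comm' (f g : Module.End ℂ (MvPolynomial (Fin 4) ℂ)) (h : g * f = f * g + 1) :
    f * -g = -g * f + 1 := by
  apply LinearMap.ext; intro p
  have hp := DFunLike.congr_fun h p
  simp only [Module.End.mul_apply, LinearMap.add_apply, Module.End.one_apply] at hp
  simp only [Module.End.mul_apply, LinearMap.add_apply, Module.End.one_apply,
    LinearMap.neg_apply, map_neg, hp]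
  abel

lemma bos_commDnegD (i j : Fin 4) :
    ((MvPolynomial.pderiv i).toLinearMap : Module.End ℂ (MvPolynomial (Fin 4) ℂ)) *
        (-(MvPolynomial.pderiv j).toLinearMap) =
      (-(MvPolynomial.pderiv j).toLinearMap) * (MvPolynomial.pderiv i).toLinearMap :=
  bos_neg_comm _ _ (bos_commDD i j)

lemma bos_commMnegD_eq (i : Fin 4) :
    (LinearMap.mulLeft ℂ (MvPolynomial.X i) : Module.End ℂ (MvPolynomial (Fin 4) ℂ)) *
        (-(MvPolynomial.pderiv i).toLinearMap) =
      (-(MvPolynomial.pderiv i).toLinearMap) * LinearMap.mulLeft ℂ (MvPolynomial.X i) + 1 :=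
  bos_neg_comm' _ _ (bos_commDM_eq i)

lemma bos_commMnegD_ne (i j : Fin 4) (hij : i ≠ j) :
    (LinearMap.mulLeft ℂ (MvPolynomial.X i) : Module.End ℂ (MvPolynomial (Fin 4) ℂ)) *
        (-(MvPolynomial.pderiv j).toLinearMap) =
      (-(MvPolynomial.pderiv j).toLinearMap) * LinearMap.mulLeft ℂ (MvPolynomial.X i) :=
  bos_neg_comm _ _ (bos_commDM_ne j i (fun e => hij e.symm)).symm

lemma bos_finmk2 (h : (2:ℕ) < 4) : (⟨2, h⟩ : Fin 4) = 2 := rfl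
lemma bos_finmk3 (h : (3:ℕ) < 4) : (⟨3, h⟩ : Fin 4) = 3 := rfl

lemma bos_comm1 (a b : Fin 4) :
    bosPhi a * bosPhiT b = bosPhiT b * bosPhi a + (if a = b then 1 else 0) := by
  fin_cases a <;> fin_cases b
  · simp only [bosPhi, bosPhiT, Fin.mk_zero, Fin.mk_one, bos_finmk2, bos_finmk3,
      Matrix.cons_val_zero, Matrix.cons_val_one, Matrix.head_cons,
      Matrix.cons_val_two, Matrix.tail_cons, Matrix.cons_val_three]
    rw [if_true]
    exact bos_commDM_eq 0
  · simp only [bosPhi, bosPhiT, Fin.mk_zero, Fin.mk_one, bos_finmk2, bos_finmk3,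
      Matrix.cons_val_zero, Matrix.cons_val_one, Matrix.head_cons,
      Matrix.cons_val_two, Matrix.tail_cons, Matrix.cons_val_three]
    rw [if_neg (by decide : ¬((0 : Fin 4) = 1)), add_zero]
    exact bos_commDM_ne 0 1 (by decide)
  · simp only [bosPhi, bosPhiT, Fin.mk_zero, Fin.mk_one, bos_finmk2, bos_finmk3,
      Matrix.cons_val_zero, Matrix.cons_val_one, Matrix.head_cons,
      Matrix.cons_val_two, Matrix.tail_cons, Matrix.cons_val_three]
    rw [if_neg (by decide : ¬((0 : Fin 4) = 2)), add_zero]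
    exact bos_commDnegD 0 2
  · simp only [bosPhi, bosPhiT, Fin.mk_zero, Fin.mk_one, bos_finmk2, bos_finmk3,
      Matrix.cons_val_zero, Matrix.cons_val_one, Matrix.head_cons,
      Matrix.cons_val_two, Matrix.tail_cons, Matrix.cons_val_three]
    rw [if_neg (by decide : ¬((0 : Fin 4) = 3)), add_zero]
    exact bos_commDnegD 0 3
  · simp only [bosPhi, bosPhiT, Fin.mk_zero, Fin.mk_one, bos_finmk2, bos_finmk3,
      Matrix.cons_val_zero, Matrix.cons_val_one, Matrix.head_cons,
      Matrix.cons_val_two, Matrix.tail_cons, Matrix.cons_val_three]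
    rw [if_neg (by decide : ¬((1 : Fin 4) = 0)), add_zero]
    exact bos_commDM_ne 1 0 (by decide)
  · simp only [bosPhi, bosPhiT, Fin.mk_zero, Fin.mk_one, bos_finmk2, bos_finmk3,
      Matrix.cons_val_zero, Matrix.cons_val_one, Matrix.head_cons,
      Matrix.cons_val_two, Matrix.tail_cons, Matrix.cons_val_three]
    rw [if_true]
    exact bos_commDM_eq 1
  · simp only [bosPhi, bosPhiT, Fin.mk_zero, Fin.mk_one, bos_finmk2, bos_finmk3,
      Matrix.cons_val_zero, Matrix.cons_val_one, Matrix.head_cons,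
      Matrix.cons_val_two, Matrix.tail_cons, Matrix.cons_val_three]
    rw [if_neg (by decide : ¬((1 : Fin 4) = 2)), add_zero]
    exact bos_commDnegD 1 2
  · simp only [bosPhi, bosPhiT, Fin.mk_zero, Fin.mk_one, bos_finmk2, bos_finmk3,
      Matrix.cons_val_zero, Matrix.cons_val_one, Matrix.head_cons,
      Matrix.cons_val_two, Matrix.tail_cons, Matrix.cons_val_three]
    rw [if_neg (by decide : ¬((1 : Fin 4) = 3)), add_zero]
    exact bos_commDnegD 1 3
  · simp only [bosPhi, bosPhiT, Fin.mk_zero, Fin.mk_one, bos_finmk2, bos_finmk3,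
      Matrix.cons_val_zero, Matrix.cons_val_one, Matrix.head_cons,
      Matrix.cons_val_two, Matrix.tail_cons, Matrix.cons_val_three]
    rw [if_neg (by decide : ¬((2 : Fin 4) = 0)), add_zero]
    exact bos_commMM 2 0
  · simp only [bosPhi, bosPhiT, Fin.mk_zero, Fin.mk_one, bos_finmk2, bos_finmk3,
      Matrix.cons_val_zero, Matrix.cons_val_one, Matrix.head_cons,
      Matrix.cons_val_two, Matrix.tail_cons, Matrix.cons_val_three]
    rw [if_neg (by decide : ¬((2 : Fin 4) = 1)), add_zero]
    exact bos_commMM 2 1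
  · simp only [bosPhi, bosPhiT, Fin.mk_zero, Fin.mk_one, bos_finmk2, bos_finmk3,
      Matrix.cons_val_zero, Matrix.cons_val_one, Matrix.head_cons,
      Matrix.cons_val_two, Matrix.tail_cons, Matrix.cons_val_three]
    rw [if_true]
    exact bos_commMnegD_eq 2
  · simp only [bosPhi, bosPhiT, Fin.mk_zero, Fin.mk_one, bos_finmk2, bos_finmk3,
      Matrix.cons_val_zero, Matrix.cons_val_one, Matrix.head_cons,
      Matrix.cons_val_two, Matrix.tail_cons, Matrix.cons_val_three]
    rw [if_neg (by decide : ¬((2 : Fin 4) = 3)), add_zero]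
    exact bos_commMnegD_ne 2 3 (by decide)
  · simp only [bosPhi, bosPhiT, Fin.mk_zero, Fin.mk_one, bos_finmk2, bos_finmk3,
      Matrix.cons_val_zero, Matrix.cons_val_one, Matrix.head_cons,
      Matrix.cons_val_two, Matrix.tail_cons, Matrix.cons_val_three]
    rw [if_neg (by decide : ¬((3 : Fin 4) = 0)), add_zero]
    exact bos_commMM 3 0
  · simp only [bosPhi, bosPhiT, Fin.mk_zero, Fin.mk_one, bos_finmk2, bos_finmk3,
      Matrix.cons_val_zero, Matrix.cons_val_one, Matrix.head_cons,
      Matrix.cons_val_two, Matrix.tail_cons, Matrix.cons_val_three]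
    rw [if_neg (by decide : ¬((3 : Fin 4) = 1)), add_zero]
    exact bos_commMM 3 1
  · simp only [bosPhi, bosPhiT, Fin.mk_zero, Fin.mk_one, bos_finmk2, bos_finmk3,
      Matrix.cons_val_zero, Matrix.cons_val_one, Matrix.head_cons,
      Matrix.cons_val_two, Matrix.tail_cons, Matrix.cons_val_three]
    rw [if_neg (by decide : ¬((3 : Fin 4) = 2)), add_zero]
    exact bos_commMnegD_ne 3 2 (by decide)
  · simp only [bosPhi, bosPhiT, Fin.mk_zero, Fin.mk_one, bos_finmk2, bos_finmk3,
      Matrix.cons_val_zero, Matrix.cons_val_one, Matrix.head_cons,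
      Matrix.cons_val_two, Matrix.tail_cons, Matrix.cons_val_three]
    rw [if_true]
    exact bos_commMnegD_eq 3

lemma bos_comm2 (a b : Fin 4) : bosPhi a * bosPhi b = bosPhi b * bosPhi a := by
  fin_cases a <;> fin_cases b
  · simp only [bosPhi, Fin.mk_zero, Fin.mk_one, bos_finmk2, bos_finmk3,
      Matrix.cons_val_zero, Matrix.cons_val_one, Matrix.head_cons,
      Matrix.cons_val_two, Matrix.tail_cons, Matrix.cons_val_three]
  · simp only [bosPhi, Fin.mk_zero, Fin.mk_one, bos_finmk2, bos_finmk3,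
      Matrix.cons_val_zero, Matrix.cons_val_one, Matrix.head_cons,
      Matrix.cons_val_two, Matrix.tail_cons, Matrix.cons_val_three]
    exact bos_commDD 0 1
  · simp only [bosPhi, Fin.mk_zero, Fin.mk_one, bos_finmk2, bos_finmk3,
      Matrix.cons_val_zero, Matrix.cons_val_one, Matrix.head_cons,
      Matrix.cons_val_two, Matrix.tail_cons, Matrix.cons_val_three]
    exact bos_commDM_ne 0 2 (by decide)
  · simp only [bosPhi, Fin.mk_zero, Fin.mk_one, bos_finmk2, bos_finmk3,
      Matrix.cons_val_zero, Matrix.cons_val_one, Matrix.head_cons,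
      Matrix.cons_val_two, Matrix.tail_cons, Matrix.cons_val_three]
    exact bos_commDM_ne 0 3 (by decide)
  · simp only [bosPhi, Fin.mk_zero, Fin.mk_one, bos_finmk2, bos_finmk3,
      Matrix.cons_val_zero, Matrix.cons_val_one, Matrix.head_cons,
      Matrix.cons_val_two, Matrix.tail_cons, Matrix.cons_val_three]
    exact bos_commDD 1 0
  · simp only [bosPhi, Fin.mk_zero, Fin.mk_one, bos_finmk2, bos_finmk3,
      Matrix.cons_val_zero, Matrix.cons_val_one, Matrix.head_cons,
      Matrix.cons_val_two, Matrix.tail_cons, Matrix.cons_val_three]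
  · simp only [bosPhi, Fin.mk_zero, Fin.mk_one, bos_finmk2, bos_finmk3,
      Matrix.cons_val_zero, Matrix.cons_val_one, Matrix.head_cons,
      Matrix.cons_val_two, Matrix.tail_cons, Matrix.cons_val_three]
    exact bos_commDM_ne 1 2 (by decide)
  · simp only [bosPhi, Fin.mk_zero, Fin.mk_one, bos_finmk2, bos_finmk3,
      Matrix.cons_val_zero, Matrix.cons_val_one, Matrix.head_cons,
      Matrix.cons_val_two, Matrix.tail_cons, Matrix.cons_val_three]
    exact bos_commDM_ne 1 3 (by decide)
  · simp only [bosPhi, Fin.mk_zero, Fin.mk_one, bos_finmk2, bos_finmk3,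
      Matrix.cons_val_zero, Matrix.cons_val_one, Matrix.head_cons,
      Matrix.cons_val_two, Matrix.tail_cons, Matrix.cons_val_three]
    exact (bos_commDM_ne 0 2 (by decide)).symm
  · simp only [bosPhi, Fin.mk_zero, Fin.mk_one, bos_finmk2, bos_finmk3,
      Matrix.cons_val_zero, Matrix.cons_val_one, Matrix.head_cons,
      Matrix.cons_val_two, Matrix.tail_cons, Matrix.cons_val_three]
    exact (bos_commDM_ne 1 2 (by decide)).symm
  · simp only [bosPhi, Fin.mk_zero, Fin.mk_one, bos_finmk2, bos_finmk3,
      Matrix.cons_val_zero, Matrix.cons_val_one, Matrix.head_cons,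
      Matrix.cons_val_two, Matrix.tail_cons, Matrix.cons_val_three]
  · simp only [bosPhi, Fin.mk_zero, Fin.mk_one, bos_finmk2, bos_finmk3,
      Matrix.cons_val_zero, Matrix.cons_val_one, Matrix.head_cons,
      Matrix.cons_val_two, Matrix.tail_cons, Matrix.cons_val_three]
    exact bos_commMM 2 3
  · simp only [bosPhi, Fin.mk_zero, Fin.mk_one, bos_finmk2, bos_finmk3,
      Matrix.cons_val_zero, Matrix.cons_val_one, Matrix.head_cons,
      Matrix.cons_val_two, Matrix.tail_cons, Matrix.cons_val_three]
    exact (bos_commDM_ne 0 3 (by decide)).symm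
  · simp only [bosPhi, Fin.mk_zero, Fin.mk_one, bos_finmk2, bos_finmk3,
      Matrix.cons_val_zero, Matrix.cons_val_one, Matrix.head_cons,
      Matrix.cons_val_two, Matrix.tail_cons, Matrix.cons_val_three]
    exact (bos_commDM_ne 1 3 (by decide)).symm
  · simp only [bosPhi, Fin.mk_zero, Fin.mk_one, bos_finmk2, bos_finmk3,
      Matrix.cons_val_zero, Matrix.cons_val_one, Matrix.head_cons,
      Matrix.cons_val_two, Matrix.tail_cons, Matrix.cons_val_three]
    exact bos_commMM 3 2
  · simp only [bosPhi, Fin.mk_zero, Fin.mk_one, bos_finmk2, bos_finmk3,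
      Matrix.cons_val_zero, Matrix.cons_val_one, Matrix.head_cons,
      Matrix.cons_val_two, Matrix.tail_cons, Matrix.cons_val_three]

/-- The bosonic oscillator realization of `u(2,2)` satisfies the quadratic
characteristic identity `E(E − (⟨E⟩ + 3)) = 0` of massless representations:
entrywise, `Σ_k E^i_k ∘ E^k_j = E^i_j ∘ (⟨E⟩ + 3·id)`. -/
theorem bosonic_quadratic_identity (i j : Fin 4) :
    ∑ k : Fin 4, bosE i k * bosE k j =
      bosE i j * (bosTrE + 3 • (1 : Module.End ℂ (MvPolynomial (Fin 4) ℂ))) := by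
  have A : ∀ k : Fin 4, bosE i k * bosE k j =
      bosPhiT i * bosPhiT k * bosPhi k * bosPhi j + bosE i j := by
    intro k
    have h : bosPhi k * bosPhiT k = bosPhiT k * bosPhi k + 1 := by
      simpa using bos_comm1 k k
    show bosPhiT i * bosPhi k * (bosPhiT k * bosPhi j) = _
    calc bosPhiT i * bosPhi k * (bosPhiT k * bosPhi j)
        = bosPhiT i * (bosPhi k * bosPhiT k) * bosPhi j := by noncomm_ring
      _ = bosPhiT i * (bosPhiT k * bosPhi k + 1) * bosPhi j := by rw [h]
      _ = bosPhiT i * bosPhiT k * bosPhi k * bosPhi j + bosE i j := by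
          unfold bosE; noncomm_ring
  have B : ∀ c : Fin 4, bosE i j * bosE c c =
      bosPhiT i * bosPhiT c * bosPhi c * bosPhi j +
        (if j = c then bosE i j else 0) := by
    intro c
    have h1 := bos_comm1 j c
    have h2 := bos_comm2 j c
    show bosPhiT i * bosPhi j * (bosPhiT c * bosPhi c) = _
    by_cases hjc : j = c
    · subst hjc
      rw [if_pos rfl] at h1 ⊢
      calc bosPhiT i * bosPhi j * (bosPhiT j * bosPhi j)
          = bosPhiT i * (bosPhi j * bosPhiT j) * bosPhi j := by noncomm_ring
        _ = bosPhiT i * (bosPhiT j * bosPhi j + 1) * bosPhi j := by rw [h1]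
        _ = bosPhiT i * bosPhiT j * bosPhi j * bosPhi j + bosE i j := by
            unfold bosE; noncomm_ring
    · rw [if_neg hjc] at h1 ⊢
      rw [add_zero] at h1 ⊢
      calc bosPhiT i * bosPhi j * (bosPhiT c * bosPhi c)
          = bosPhiT i * (bosPhi j * bosPhiT c) * bosPhi c := by noncomm_ring
        _ = bosPhiT i * (bosPhiT c * bosPhi j) * bosPhi c := by rw [h1]
        _ = bosPhiT i * bosPhiT c * (bosPhi j * bosPhi c) := by noncomm_ring
        _ = bosPhiT i * bosPhiT c * (bosPhi c * bosPhi j) := by rw [h2]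
        _ = bosPhiT i * bosPhiT c * bosPhi c * bosPhi j := by noncomm_ring
  calc ∑ k : Fin 4, bosE i k * bosE k j
      = ∑ k : Fin 4, (bosPhiT i * bosPhiT k * bosPhi k * bosPhi j + bosE i j) :=
        Finset.sum_congr rfl fun k _ => A k
    _ = (∑ k : Fin 4, bosPhiT i * bosPhiT k * bosPhi k * bosPhi j) + 4 • bosE i j := by
        rw [Finset.sum_add_distrib, Finset.sum_const, Finset.card_univ]
        simp
    _ = (∑ c : Fin 4, (bosPhiT i * bosPhiT c * bosPhi c * bosPhi j +
          (if j = c then bosE i j else 0))) + 3 • bosE i j := by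
        rw [Finset.sum_add_distrib, Finset.sum_ite_eq Finset.univ j fun _ => bosE i j]
        simp only [Finset.mem_univ, if_pos]
        module
    _ = (∑ c : Fin 4, bosE i j * bosE c c) + 3 • bosE i j :=
        congrArg (· + 3 • bosE i j)
          (Finset.sum_congr rfl fun c _ => (B c).symm)
    _ = bosE i j * (bosTrE + 3 • (1 : Module.End ℂ (MvPolynomial (Fin 4) ℂ))) := by
        rw [bosTrE, mul_add, Finset.mul_sum]
        congr 1
        rw [mul_smul_comm, mul_one]
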